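/- arXiv:1907.13557 — 3 statements merged into one kernel-verified Lean document; each statement's English description precedes it below -/
import Mathlib

section
/- The RPSN distance is reparameterization invariant: let R, S : ℝ² → ℝ³ be smooth surfaces on a domain D, and let φ = (μ,ν) : D → D be a diffeomorphism with positive Jacobian determinant |J|. Define Q_S(u,v) = √|S_u × S_v| • S and similarly Q_R, and let S̃ = S ∘ φ, R̃ = R ∘ φ. Then ∬_D ‖Q_{R̃} − Q_{S̃}‖² du dv = ∬_D ‖Q_R − Q_S‖² du dv. -/
open MeasureTheory

noncomputable def cross3 (a b : EuclideanSpace ℝ (Fin 3)) : EuclideanSpace ℝ (Fin 3) :=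
  WithLp.toLp 2 ![a 1 * b 2 - a 2 * b 1, a 2 * b 0 - a 0 * b 2, a 0 * b 1 - a 1 * b 0]

lemma cross3_comb (a b c d : ℝ) (X Y : EuclideanSpace ℝ (Fin 3)) :
    cross3 (a • X + c • Y) (b • X + d • Y) = (a * d - b * c) • cross3 X Y := by
  ext i
  fin_cases i <;>
    simp [cross3, PiLp.add_apply, PiLp.smul_apply, smul_eq_mul] <;> ring

/-- The RPSN representation `Q_S(u,v) = √‖S_u × S_v‖ • S(u,v)`. -/
noncomputable def RPSN (S : ℝ × ℝ → EuclideanSpace ℝ (Fin 3)) (p : ℝ × ℝ) :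
    EuclideanSpace ℝ (Fin 3) :=
  Real.sqrt ‖cross3 (fderiv ℝ S p (1, 0)) (fderiv ℝ S p (0, 1))‖ • S p

/-- the RPSN distance is reparameterization invariant. -/
theorem stmt2 (D : Set (ℝ × ℝ)) (hD : MeasurableSet D)
    (R S : ℝ × ℝ → EuclideanSpace ℝ (Fin 3)) (μ ν : ℝ × ℝ → ℝ)
    (hR : ContDiff ℝ 1 R) (hS : ContDiff ℝ 1 S)
    (hμ : ContDiff ℝ 1 μ) (hν : ContDiff ℝ 1 ν)
    (φ : ℝ × ℝ → ℝ × ℝ) (hφ : ∀ p, φ p = (μ p, ν p))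
    (hbij : Set.BijOn φ D D)
    (hJ : ∀ p ∈ D, 0 < fderiv ℝ μ p (1, 0) * fderiv ℝ ν p (0, 1) -
        fderiv ℝ μ p (0, 1) * fderiv ℝ ν p (1, 0)) :
    ∫ p in D, ‖RPSN (R ∘ φ) p - RPSN (S ∘ φ) p‖ ^ 2 =
      ∫ p in D, ‖RPSN R p - RPSN S p‖ ^ 2 := by
  have hφfun : φ = fun p => (μ p, ν p) := funext hφ
  set J : ℝ × ℝ → ℝ := fun p => fderiv ℝ μ p (1, 0) * fderiv ℝ ν p (0, 1) -
      fderiv ℝ μ p (0, 1) * fderiv ℝ ν p (1, 0) with hJdef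
  set φ' : ℝ × ℝ → (ℝ × ℝ) →L[ℝ] (ℝ × ℝ) := fun p => (fderiv ℝ μ p).prod (fderiv ℝ ν p)
    with hφ'def
  have hder : ∀ p, HasFDerivAt φ (φ' p) p := by
    intro p
    rw [hφfun]
    exact HasFDerivAt.prodMk ((hμ.differentiable one_ne_zero p).hasFDerivAt)
      ((hν.differentiable one_ne_zero p).hasFDerivAt)
  have hdet : ∀ p, (φ' p).det = J p := by
    intro p
    have : (φ' p).det = LinearMap.det ((φ' p) : (ℝ × ℝ) →ₗ[ℝ] (ℝ × ℝ)) := rfl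
    rw [this, ← LinearMap.det_toMatrix (Module.Basis.finTwoProd ℝ), Matrix.det_fin_two]
    simp [LinearMap.toMatrix_apply, Module.Basis.coe_finTwoProd_repr, Module.Basis.finTwoProd_zero,
      Module.Basis.finTwoProd_one, hJdef, hφ'def]
  -- key pointwise scaling
  have key : ∀ (T : ℝ × ℝ → EuclideanSpace ℝ (Fin 3)), ContDiff ℝ 1 T → ∀ p ∈ D,
      RPSN (T ∘ φ) p = Real.sqrt (J p) • RPSN T (φ p) := by
    intro T hT p hp
    have hdT : ∀ q, DifferentiableAt ℝ T q := fun q => hT.differentiable one_ne_zero q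
    have hcomp : fderiv ℝ (T ∘ φ) p = (fderiv ℝ T (φ p)).comp (φ' p) := by
      rw [← (hder p).fderiv]
      exact fderiv_comp p (hdT _) (hder p).differentiableAt
    set a := fderiv ℝ μ p (1, 0)
    set b := fderiv ℝ μ p (0, 1)
    set c := fderiv ℝ ν p (1, 0)
    set d := fderiv ℝ ν p (0, 1)
    have h1 : fderiv ℝ (T ∘ φ) p (1, 0)
        = a • fderiv ℝ T (φ p) (1, 0) + c • fderiv ℝ T (φ p) (0, 1) := by
      rw [hcomp]
      have : φ' p (1, 0) = a • ((1 : ℝ), (0 : ℝ)) + c • ((0 : ℝ), (1 : ℝ)) := by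
        simp [hφ'def, Prod.ext_iff]
        exact ⟨rfl, rfl⟩
      rw [ContinuousLinearMap.comp_apply, this, map_add, ContinuousLinearMap.map_smul, ContinuousLinearMap.map_smul]
    have h2 : fderiv ℝ (T ∘ φ) p (0, 1)
        = b • fderiv ℝ T (φ p) (1, 0) + d • fderiv ℝ T (φ p) (0, 1) := by
      rw [hcomp]
      have : φ' p (0, 1) = b • ((1 : ℝ), (0 : ℝ)) + d • ((0 : ℝ), (1 : ℝ)) := by
        simp [hφ'def, Prod.ext_iff]
        exact ⟨rfl, rfl⟩
      rw [ContinuousLinearMap.comp_apply, this, map_add, ContinuousLinearMap.map_smul, ContinuousLinearMap.map_smul]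
    have hJp : 0 < J p := hJ p hp
    have hJp' : a * d - b * c = J p := rfl
    rw [RPSN, h1, h2, cross3_comb, hJp']
    rw [RPSN, norm_smul, Real.norm_eq_abs, abs_of_pos hJp,
      Real.sqrt_mul hJp.le, smul_smul]
    rfl
  -- the integrand transforms with the Jacobian
  have hpt : ∀ p ∈ D, ‖RPSN (R ∘ φ) p - RPSN (S ∘ φ) p‖ ^ 2
      = |(φ' p).det| • ‖RPSN R (φ p) - RPSN S (φ p)‖ ^ 2 := by
    intro p hp
    rw [key R hR p hp, key S hS p hp, ← smul_sub, norm_smul, Real.norm_eq_abs,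
      abs_of_nonneg (Real.sqrt_nonneg _), mul_pow, Real.sq_sqrt (hJ p hp).le,
      hdet p, abs_of_pos (hJ p hp), smul_eq_mul]
  calc ∫ p in D, ‖RPSN (R ∘ φ) p - RPSN (S ∘ φ) p‖ ^ 2
      = ∫ p in D, |(φ' p).det| • ‖RPSN R (φ p) - RPSN S (φ p)‖ ^ 2 :=
        setIntegral_congr_fun hD hpt
    _ = ∫ p in φ '' D, ‖RPSN R p - RPSN S p‖ ^ 2 :=
        (integral_image_eq_integral_abs_det_fderiv_smul volume hD
          (fun p _ => (hder p).hasFDerivWithinAt) hbij.injOn (fun q => ‖RPSN R q - RPSN S q‖ ^ 2)).symm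
    _ = ∫ p in D, ‖RPSN R p - RPSN S p‖ ^ 2 := by rw [hbij.image_eq]
end

section
/- The RPSN representation transforms with the square root of the Jacobian determinant: if S̃(u,v) = S(μ(u,v), ν(u,v)) with Jacobian determinant |J| ≥ 0, then Q_{S̃}(u,v) = √|J(u,v)| • Q_S(μ(u,v), ν(u,v)), where Q_S = √‖S_u × S_v‖ • S. -/
lemma cross3_lin (a b c d : ℝ) (x y : EuclideanSpace ℝ (Fin 3)) :
    cross3 (a • x + b • y) (c • x + d • y) = (a * d - b * c) • cross3 x y := by
  ext i
  fin_cases i <;>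
    simp [cross3, PiLp.smul_apply, PiLp.add_apply, smul_eq_mul] <;> ring

/-- the RPSN representation transforms with the square root of the
Jacobian determinant. -/
theorem stmt3 (S : ℝ × ℝ → EuclideanSpace ℝ (Fin 3)) (μ ν : ℝ × ℝ → ℝ)
    (hS : Differentiable ℝ S) (hμ : Differentiable ℝ μ) (hν : Differentiable ℝ ν)
    (J : ℝ × ℝ → ℝ)
    (hJdef : ∀ p, J p = fderiv ℝ μ p (1, 0) * fderiv ℝ ν p (0, 1) -
        fderiv ℝ μ p (0, 1) * fderiv ℝ ν p (1, 0))
    (hJ : ∀ p, 0 ≤ J p)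
    (Stilde : ℝ × ℝ → EuclideanSpace ℝ (Fin 3))
    (hSt : ∀ p, Stilde p = S (μ p, ν p)) (p : ℝ × ℝ) :
    RPSN Stilde p = Real.sqrt (J p) • RPSN S (μ p, ν p) := by
  have hf : HasFDerivAt (fun q : ℝ × ℝ => (μ q, ν q))
      (((fderiv ℝ μ p).prod (fderiv ℝ ν p))) p :=
    ((hμ p).hasFDerivAt.prodMk (hν p).hasFDerivAt)
  have hcomp : HasFDerivAt Stilde
      ((fderiv ℝ S (μ p, ν p)).comp ((fderiv ℝ μ p).prod (fderiv ℝ ν p))) p := by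
    have : HasFDerivAt (fun q : ℝ × ℝ => S (μ q, ν q))
        ((fderiv ℝ S (μ p, ν p)).comp ((fderiv ℝ μ p).prod (fderiv ℝ ν p))) p :=
      (hS (μ p, ν p)).hasFDerivAt.comp p hf
    exact this.congr_of_eventuallyEq (by filter_upwards with q using (hSt q))
  have hfd := hcomp.fderiv
  set D := fderiv ℝ S (μ p, ν p)
  set mu := fderiv ℝ μ p
  set nu := fderiv ℝ ν p
  have key : ∀ v : ℝ × ℝ, fderiv ℝ Stilde p v = mu v • D (1, 0) + nu v • D (0, 1) := by
    intro v
    rw [hfd]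
    have hv : ((mu v, nu v) : ℝ × ℝ) = mu v • ((1 : ℝ), (0 : ℝ)) + nu v • (0, 1) := by
      simp [Prod.ext_iff]
    simp only [ContinuousLinearMap.comp_apply, ContinuousLinearMap.prod_apply, hv,
      map_add, map_smul]
  have hcross : cross3 (fderiv ℝ Stilde p (1, 0)) (fderiv ℝ Stilde p (0, 1)) =
      J p • cross3 (D (1, 0)) (D (0, 1)) := by
    rw [key, key, cross3_lin, hJdef]; congr 1; simp only [mu, nu]; ring
  have hnorm : ‖cross3 (fderiv ℝ Stilde p (1, 0)) (fderiv ℝ Stilde p (0, 1))‖ =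
      J p * ‖cross3 (D (1, 0)) (D (0, 1))‖ := by
    rw [hcross, norm_smul, Real.norm_eq_abs, abs_of_nonneg (hJ p)]
  rw [RPSN, RPSN, hnorm, Real.sqrt_mul (hJ p), hSt p, smul_smul]
end

section
/- Derivative formula for the RPSN representation: for a smooth regular surface S(u,v) with N = S_u × S_v ≠ 0 and Q = √‖N‖ • S, one has Q_u = √‖N‖ • (S_u + ½(Γ^u_{uu} + Γ^v_{vu}) • S), where Γ^u_{uu} + Γ^v_{vu} = ∂(log‖N‖)/∂u = S_{uu}·S^u + S_{uv}·S^v. -/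
open RealInnerProductSpace

private lemma cross3_add_left (a b c : EuclideanSpace ℝ (Fin 3)) :
    cross3 (a + b) c = cross3 a c + cross3 b c := by
  ext i; fin_cases i <;> simp [cross3] <;> ring

private lemma cross3_add_right (a b c : EuclideanSpace ℝ (Fin 3)) :
    cross3 a (b + c) = cross3 a b + cross3 a c := by
  ext i; fin_cases i <;> simp [cross3] <;> ring

private lemma cross3_smul_left (r : ℝ) (a b : EuclideanSpace ℝ (Fin 3)) :
    cross3 (r • a) b = r • cross3 a b := by
  ext i; fin_cases i <;> simp [cross3] <;> ring

private lemma cross3_smul_right (r : ℝ) (a b : EuclideanSpace ℝ (Fin 3)) :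
    cross3 a (r • b) = r • cross3 a b := by
  ext i; fin_cases i <;> simp [cross3] <;> ring

private lemma triple3 (a b c : EuclideanSpace ℝ (Fin 3)) :
    ⟪cross3 a b, c⟫ = ⟪a, cross3 b c⟫ := by
  simp [cross3, PiLp.inner_apply, Fin.sum_univ_three]; ring

noncomputable def crossCLM :
    EuclideanSpace ℝ (Fin 3) →L[ℝ] EuclideanSpace ℝ (Fin 3) →L[ℝ] EuclideanSpace ℝ (Fin 3) :=
  LinearMap.toContinuousLinearMap
  { toFun := fun a => LinearMap.toContinuousLinearMap
      { toFun := fun b => cross3 a b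
        map_add' := fun b c => cross3_add_right a b c
        map_smul' := fun r b => cross3_smul_right r a b }
    map_add' := by
      intro a b; apply ContinuousLinearMap.ext; intro c
      simpa using cross3_add_left a b c
    map_smul' := by
      intro r a; apply ContinuousLinearMap.ext; intro c
      simpa using cross3_smul_left r a c }

@[simp] lemma crossCLM_apply (a b : EuclideanSpace ℝ (Fin 3)) : crossCLM a b = cross3 a b := rfl

/-- derivative formula for the RPSN representation
`Q_u = √‖N‖ • (S_u + ½(Γ^u_{uu} + Γ^v_{vu}) • S)` with
`Γ^u_{uu} + Γ^v_{vu} = ∂(log‖N‖)/∂u = S_uu·S^u + S_uv·S^v`. -/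
theorem stmt12 (S : ℝ × ℝ → EuclideanSpace ℝ (Fin 3)) (hS : ContDiff ℝ 2 S)
    (Su Sv : ℝ × ℝ → EuclideanSpace ℝ (Fin 3))
    (hSu : ∀ p, Su p = fderiv ℝ S p (1, 0)) (hSv : ∀ p, Sv p = fderiv ℝ S p (0, 1))
    (Nn : ℝ × ℝ → EuclideanSpace ℝ (Fin 3)) (hN : ∀ p, Nn p = cross3 (Su p) (Sv p))
    (Q : ℝ × ℝ → EuclideanSpace ℝ (Fin 3))
    (hQ : ∀ p, Q p = Real.sqrt ‖Nn p‖ • S p)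
    (p₀ : ℝ × ℝ) (hreg : Nn p₀ ≠ 0)
    (n Scu Scv : EuclideanSpace ℝ (Fin 3))
    (hn : n = ‖Nn p₀‖⁻¹ • Nn p₀)
    (hScu : Scu = ‖Nn p₀‖⁻¹ • cross3 (Sv p₀) n)
    (hScv : Scv = ‖Nn p₀‖⁻¹ • cross3 n (Su p₀)) :
    fderiv ℝ Q p₀ (1, 0) =
      Real.sqrt ‖Nn p₀‖ •
        (Su p₀ + ((1 / 2 : ℝ) *
          (⟪fderiv ℝ Su p₀ (1, 0), Scu⟫ + ⟪fderiv ℝ Su p₀ (0, 1), Scv⟫)) • S p₀) ∧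
    fderiv ℝ (fun p => Real.log ‖Nn p‖) p₀ (1, 0) =
      ⟪fderiv ℝ Su p₀ (1, 0), Scu⟫ + ⟪fderiv ℝ Su p₀ (0, 1), Scv⟫ := by
  have hSd : Differentiable ℝ S := hS.differentiable two_ne_zero
  set r := ‖Nn p₀‖ with hr
  have rpos : 0 < r := norm_pos_iff.2 hreg
  have rne : r ≠ 0 := rpos.ne'
  have hNN : ⟪Nn p₀, Nn p₀⟫ = r ^ 2 := real_inner_self_eq_norm_sq _
  have hNNne : ⟪Nn p₀, Nn p₀⟫ ≠ 0 := by rw [hNN]; positivity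
  have hrr : Real.sqrt ⟪Nn p₀, Nn p₀⟫ = r := by rw [hNN]; exact Real.sqrt_sq rpos.le
  -- second-order data
  have hf1 : ContDiff ℝ 1 (fderiv ℝ S) := hS.fderiv_right (le_refl 2)
  set D2 := fderiv ℝ (fderiv ℝ S) p₀ with hD2
  have hD2' : HasFDerivAt (fderiv ℝ S) D2 p₀ := (hf1.differentiable one_ne_zero p₀).hasFDerivAt
  have happly : ∀ v : ℝ × ℝ, HasFDerivAt (fun p => fderiv ℝ S p v)
      ((ContinuousLinearMap.apply ℝ (EuclideanSpace ℝ (Fin 3)) v).comp D2) p₀ :=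
    fun v => (ContinuousLinearMap.apply ℝ (EuclideanSpace ℝ (Fin 3)) v).hasFDerivAt.comp p₀ hD2'
  have hSu' : HasFDerivAt Su
      ((ContinuousLinearMap.apply ℝ (EuclideanSpace ℝ (Fin 3)) (1, 0)).comp D2) p₀ := by
    have h : Su = fun p => fderiv ℝ S p (1, 0) := funext hSu
    rw [h]; exact happly _
  have hSv' : HasFDerivAt Sv
      ((ContinuousLinearMap.apply ℝ (EuclideanSpace ℝ (Fin 3)) (0, 1)).comp D2) p₀ := by
    have h : Sv = fun p => fderiv ℝ S p (0, 1) := funext hSv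
    rw [h]; exact happly _
  have hsym : ∀ v w, D2 v w = D2 w v := hS.contDiffAt.isSymmSndFDerivAt (by simp [minSmoothness_of_isRCLikeNormedField])
  set Suu := D2 (1, 0) (1, 0) with hSuu
  set Suv := D2 (1, 0) (0, 1) with hSuv
  have hfSu1 : fderiv ℝ Su p₀ (1, 0) = Suu := by rw [hSu'.fderiv]; simp [hSuu]
  have hfSu2 : fderiv ℝ Su p₀ (0, 1) = Suv := by
    rw [hSu'.fderiv]; simpa using hsym (0, 1) (1, 0)
  -- derivative of Nn
  have hNf : Nn = fun p => crossCLM (Su p) (Sv p) := funext fun p => by rw [hN p, crossCLM_apply]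
  set N' := crossCLM.precompR (ℝ × ℝ) (Su p₀)
        ((ContinuousLinearMap.apply ℝ (EuclideanSpace ℝ (Fin 3)) (0, 1)).comp D2) +
      crossCLM.precompL (ℝ × ℝ)
        ((ContinuousLinearMap.apply ℝ (EuclideanSpace ℝ (Fin 3)) (1, 0)).comp D2) (Sv p₀)
    with hN'def
  have hN' : HasFDerivAt Nn N' p₀ := by
    rw [hNf]; exact crossCLM.hasFDerivAt_of_bilinear hSu' hSv'
  have hNPval : N' (1, 0) = cross3 (Su p₀) Suv + cross3 Suu (Sv p₀) := by
    rw [hN'def]; simp [hSuu, hSuv]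
  set T := ⟪N' (1, 0), Nn p₀⟫ with hTdef
  -- derivative of the squared norm
  set I' := (fderivInnerCLM ℝ (Nn p₀, Nn p₀)).comp (N'.prod N') with hI'def
  have hinner : HasFDerivAt (fun p => ⟪Nn p, Nn p⟫) I' p₀ := hN'.inner ℝ hN'
  have hT : I' (1, 0) = 2 * T := by
    rw [hI'def, hTdef]
    simp only [ContinuousLinearMap.comp_apply, ContinuousLinearMap.prod_apply,
      fderivInnerCLM_apply]
    rw [real_inner_comm]; ring
  -- derivative of the norm
  have hnormfun : (fun p : ℝ × ℝ => ‖Nn p‖) = fun p => Real.sqrt ⟪Nn p, Nn p⟫ := by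
    funext p; rw [real_inner_self_eq_norm_sq, Real.sqrt_sq (norm_nonneg _)]
  have hnorm : HasFDerivAt (fun p : ℝ × ℝ => ‖Nn p‖) ((1 / (2 * r)) • I') p₀ := by
    have h := (Real.hasDerivAt_sqrt hNNne).comp_hasFDerivAt p₀ hinner
    rw [hrr] at h; rw [hnormfun]; exact h
  -- the log derivative
  have hlog : HasFDerivAt (fun p : ℝ × ℝ => Real.log ‖Nn p‖)
      (r⁻¹ • ((1 / (2 * r)) • I')) p₀ :=
    by have := (Real.hasDerivAt_log rne).comp_hasFDerivAt p₀ hnorm; exact this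
  -- the sqrt-norm derivative
  have hsqrtn : HasFDerivAt (fun p : ℝ × ℝ => Real.sqrt ‖Nn p‖)
      ((1 / (2 * Real.sqrt r)) • ((1 / (2 * r)) • I')) p₀ :=
    (Real.hasDerivAt_sqrt rne).comp_hasFDerivAt p₀ hnorm
  -- derivative of Q
  have hQ' : HasFDerivAt Q
      (Real.sqrt r • fderiv ℝ S p₀ +
        ((1 / (2 * Real.sqrt r)) • ((1 / (2 * r)) • I')).smulRight (S p₀)) p₀ := by
    have h : Q = fun p => Real.sqrt ‖Nn p‖ • S p := funext hQ
    rw [h]; exact hsqrtn.smul (hSd p₀).hasFDerivAt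
  -- the Christoffel sum
  have e1 : ⟪Suu, cross3 (Sv p₀) (Nn p₀)⟫ = ⟪cross3 Suu (Sv p₀), Nn p₀⟫ := (triple3 _ _ _).symm
  have e2 : ⟪Suv, cross3 (Nn p₀) (Su p₀)⟫ = ⟪cross3 (Su p₀) Suv, Nn p₀⟫ := by
    calc ⟪Suv, cross3 (Nn p₀) (Su p₀)⟫ = ⟪cross3 Suv (Nn p₀), Su p₀⟫ := (triple3 _ _ _).symm
      _ = ⟪Su p₀, cross3 Suv (Nn p₀)⟫ := real_inner_comm _ _
      _ = ⟪cross3 (Su p₀) Suv, Nn p₀⟫ := (triple3 _ _ _).symm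
  have hNPinner : T = ⟪cross3 (Su p₀) Suv, Nn p₀⟫ + ⟪cross3 Suu (Sv p₀), Nn p₀⟫ := by
    rw [hTdef, hNPval, inner_add_left]
  have key : ⟪fderiv ℝ Su p₀ (1, 0), Scu⟫ + ⟪fderiv ℝ Su p₀ (0, 1), Scv⟫ = (r * r)⁻¹ * T := by
    rw [hfSu1, hfSu2, hScu, hScv, hn, cross3_smul_right, cross3_smul_left,
      real_inner_smul_right, real_inner_smul_right, real_inner_smul_right, real_inner_smul_right,
      e1, e2, hNPinner]
    field_simp
    ring
  constructor
  · rw [hQ'.fderiv]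
    simp only [ContinuousLinearMap.add_apply, ContinuousLinearMap.smul_apply,
      ContinuousLinearMap.smulRight_apply, hT]
    rw [← hSu p₀, key, smul_add, smul_smul]
    have hss : Real.sqrt r * Real.sqrt r = r := Real.mul_self_sqrt rpos.le
    have hsne : Real.sqrt r ≠ 0 := by positivity
    congr 1
    rw [smul_smul]
    congr 1
    simp only [smul_eq_mul]
    have haux : (1 / (2 * Real.sqrt r) * (1 / (2 * (Real.sqrt r * Real.sqrt r)))) * (2 * T) =
        Real.sqrt r * (1 / 2 * (((Real.sqrt r * Real.sqrt r) * (Real.sqrt r * Real.sqrt r))⁻¹ * T)) := by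
      field_simp
    rw [hss] at haux
    exact haux
  · rw [hlog.fderiv]
    simp only [ContinuousLinearMap.smul_apply, smul_eq_mul, hT]
    rw [key]
    field_simp
end
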